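/- arXiv:1601.07803 — 3 statements merged into one kernel-verified Lean document; each statement's English description precedes it below -/
import Mathlib

section
/- Let ν and μ be integrable probability measures on ℝ. If U_μ(x) - C ≤ U_ν(x) for all x ∈ ℝ where C = sup_{x∈ℝ}{U_μ(x) - U_ν(x)}, then C ≥ |m_μ - m_ν|, where m_ν, m_μ are the means of ν and μ. -/
open MeasureTheory Filter

lemma aux_tendsto_top (μ : Measure ℝ) [IsProbabilityMeasure μ]
    (hμ : Integrable (fun y : ℝ => y) μ) :
    Tendsto (fun x : ℝ => ∫ y, (|y - x| - (x - y)) ∂μ) atTop (nhds 0) := by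
  have h := MeasureTheory.tendsto_integral_filter_of_dominated_convergence
    (μ := μ) (l := atTop) (F := fun x : ℝ => fun y : ℝ => |y - x| - (x - y))
    (f := fun _ : ℝ => (0 : ℝ)) (bound := fun y => 2 * |y|)
    (by
      filter_upwards with x
      exact (Continuous.sub (continuous_abs.comp (continuous_id.sub continuous_const))
        (continuous_const.sub continuous_id)).aestronglyMeasurable)
    (by
      filter_upwards [Filter.eventually_ge_atTop (0 : ℝ)] with x hx
      filter_upwards with y
      have hy := le_abs_self y
      have hy' := abs_nonneg y
      rcases abs_cases (y - x) with ⟨h1, h2⟩ | ⟨h1, h2⟩ <;> rw [Real.norm_eq_abs, h1]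
      · rw [abs_of_nonneg (by linarith)]; linarith
      · have h3 : -(y - x) - (x - y) = 0 := by ring
        rw [h3, abs_zero]; positivity)
    (by exact (hμ.abs).const_mul 2)
    (by
      filter_upwards with y
      have heq : (fun x : ℝ => |y - x| - (x - y)) =ᶠ[atTop] fun _ => (0 : ℝ) := by
        filter_upwards [Filter.eventually_ge_atTop y] with x hx
        rw [abs_sub_comm, abs_of_nonneg (by linarith)]; ring
      exact Filter.Tendsto.congr' heq.symm tendsto_const_nhds)
  simpa using h

lemma aux_tendsto_bot (μ : Measure ℝ) [IsProbabilityMeasure μ]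
    (hμ : Integrable (fun y : ℝ => y) μ) :
    Tendsto (fun x : ℝ => ∫ y, (|y - x| - (y - x)) ∂μ) atBot (nhds 0) := by
  have h := MeasureTheory.tendsto_integral_filter_of_dominated_convergence
    (μ := μ) (l := atBot) (F := fun x : ℝ => fun y : ℝ => |y - x| - (y - x))
    (f := fun _ : ℝ => (0 : ℝ)) (bound := fun y => 2 * |y|)
    (by
      filter_upwards with x
      exact (Continuous.sub (continuous_abs.comp (continuous_id.sub continuous_const))
        (continuous_id.sub continuous_const)).aestronglyMeasurable)
    (by
      filter_upwards [Filter.eventually_le_atBot (0 : ℝ)] with x hx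
      filter_upwards with y
      have hy := neg_abs_le y
      have hy' := abs_nonneg y
      rcases abs_cases (y - x) with ⟨h1, h2⟩ | ⟨h1, h2⟩ <;> rw [Real.norm_eq_abs, h1]
      · have h3 : (y - x) - (y - x) = 0 := by ring
        rw [h3, abs_zero]; positivity
      · rw [abs_of_nonneg (by linarith)]; linarith)
    (by exact (hμ.abs).const_mul 2)
    (by
      filter_upwards with y
      have heq : (fun x : ℝ => |y - x| - (y - x)) =ᶠ[atBot] fun _ => (0 : ℝ) := by
        filter_upwards [Filter.eventually_le_atBot y] with x hx
        rw [abs_of_nonneg (by linarith)]; ring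
      exact Filter.Tendsto.congr' heq.symm tendsto_const_nhds)
  simpa using h

/-- If `C = sup_x {U_μ(x) - U_ν(x)}` satisfies `U_μ - C ≤ U_ν` on `ℝ`, then
`C ≥ |m_μ - m_ν|`, where `m_ν, m_μ` are the means. -/
theorem stmt_2 (μ ν : Measure ℝ) [IsProbabilityMeasure μ] [IsProbabilityMeasure ν]
    (hμ : Integrable (fun y : ℝ => y) μ) (hν : Integrable (fun y : ℝ => y) ν)
    (C : ℝ) (hC : C = ⨆ x : ℝ, ((-∫ y, |y - x| ∂μ) - (-∫ y, |y - x| ∂ν)))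
    (hord : ∀ x : ℝ, (-∫ y, |y - x| ∂μ) - C ≤ -∫ y, |y - x| ∂ν) :
    |(∫ y, y ∂μ) - ∫ y, y ∂ν| ≤ C := by
  set mμ := ∫ y, y ∂μ with hmμ
  set mν := ∫ y, y ∂ν with hmν
  have hkey : ∀ x : ℝ, (∫ y, |y - x| ∂ν) ≤ (∫ y, |y - x| ∂μ) + C := by
    intro x; have := hord x; linarith
  -- integrability facts
  have hintμ : ∀ x : ℝ, Integrable (fun y : ℝ => |y - x|) μ :=
    fun x => (hμ.sub (integrable_const x)).abs
  have hintν : ∀ x : ℝ, Integrable (fun y : ℝ => |y - x|) ν :=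
    fun x => (hν.sub (integrable_const x)).abs
  -- lower bounds on A_ν
  have hAν : ∀ x : ℝ, |x - mν| ≤ ∫ y, |y - x| ∂ν := by
    intro x
    have h1 : ∫ y, (y - x) ∂ν = mν - x := by
      rw [integral_sub hν (integrable_const x), integral_const]; simp [hmν]
    calc |x - mν| = |∫ y, (y - x) ∂ν| := by rw [h1, abs_sub_comm]
      _ ≤ ∫ y, |y - x| ∂ν := by
          simpa [Real.norm_eq_abs] using
            norm_integral_le_integral_norm (μ := ν) (f := fun y : ℝ => y - x)
  -- A_μ decompositions
  have hAμtop : ∀ x : ℝ, ∫ y, |y - x| ∂μ = (∫ y, (|y - x| - (x - y)) ∂μ) + (x - mμ) := by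
    intro x
    rw [integral_sub (hintμ x)
      (show Integrable (fun y : ℝ => x - y) μ from (integrable_const x).sub hμ),
      integral_sub (integrable_const x) hμ, integral_const]
    simp [hmμ]
  have hAμbot : ∀ x : ℝ, ∫ y, |y - x| ∂μ = (∫ y, (|y - x| - (y - x)) ∂μ) + (mμ - x) := by
    intro x
    rw [integral_sub (hintμ x)
      (show Integrable (fun y : ℝ => y - x) μ from hμ.sub (integrable_const x)),
      integral_sub hμ (integrable_const x), integral_const]
    simp [hmμ]
  -- upper direction: mμ - mν ≤ C
  have h1 : mμ - mν ≤ C := by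
    have htend : Tendsto (fun x : ℝ => (mμ - mν) - ∫ y, (|y - x| - (x - y)) ∂μ)
        atTop (nhds (mμ - mν)) := by
      simpa using (tendsto_const_nhds (x := mμ - mν) (f := atTop)).sub (aux_tendsto_top μ hμ)
    refine le_of_tendsto' htend ?_
    intro x
    have h2 := hkey x
    have h3 := hAν x
    have h4 : x - mν ≤ |x - mν| := le_abs_self _
    have h5 := hAμtop x
    linarith
  -- lower direction: mν - mμ ≤ C
  have h2 : mν - mμ ≤ C := by
    have htend : Tendsto (fun x : ℝ => (mν - mμ) - ∫ y, (|y - x| - (y - x)) ∂μ)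
        atBot (nhds (mν - mμ)) := by
      simpa using (tendsto_const_nhds (x := mν - mμ) (f := atBot)).sub (aux_tendsto_bot μ hμ)
    refine le_of_tendsto' htend ?_
    intro x
    have h2 := hkey x
    have h3 := hAν x
    have h4 : -(x - mν) ≤ |x - mν| := neg_le_abs _
    have h5 := hAμbot x
    linarith
  exact abs_sub_le_iff.mpr ⟨h1, h2⟩
end

section
/- A closed set B ⊆ [-∞,+∞] × [0,+∞] satisfying (a) (x,+∞) ∈ B for all x, (b) (±∞,t) ∈ B for all t, (c) (x,t) ∈ B and s > t imply (x,s) ∈ B, can be represented as B = {(x,t) : t ≥ R(x)} for a lower semi-continuous function R : ℝ → [0,+∞]. -/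
open Set

/-- A Root barrier `B ⊆ [-∞,+∞] × [0,+∞]`, i.e. a closed set containing the lines
`t = +∞` and `x = ±∞` and closed under increasing time, can be represented as
`B = {(x,t) : t ≥ R(x)}` (over finite `x` and nonnegative times `t`) for a
lower semicontinuous function `R : ℝ → [0,+∞]`. -/
theorem stmt_3 (B : Set (EReal × EReal))
    (hsub : B ⊆ univ ×ˢ {t : EReal | 0 ≤ t})
    (hclosed : IsClosed B)
    (ha : ∀ x : EReal, (x, (⊤ : EReal)) ∈ B)
    (hb : ∀ t : EReal, 0 ≤ t → ((⊤ : EReal), t) ∈ B ∧ ((⊥ : EReal), t) ∈ B)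
    (hc : ∀ x t s : EReal, (x, t) ∈ B → t < s → (x, s) ∈ B) :
    ∃ R : ℝ → EReal, LowerSemicontinuous R ∧ (∀ x, 0 ≤ R x) ∧
      ∀ (x : ℝ) (t : EReal), 0 ≤ t → (((x : EReal), t) ∈ B ↔ R x ≤ t) := by
  set R : ℝ → EReal := fun x => sInf {t : EReal | ((x : EReal), t) ∈ B} with hR
  have hSclosed : ∀ x : ℝ, IsClosed {t : EReal | ((x : EReal), t) ∈ B} := by
    intro x
    exact hclosed.preimage (Continuous.prodMk_right (x : EReal))
  have hSne : ∀ x : ℝ, {t : EReal | ((x : EReal), t) ∈ B}.Nonempty :=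
    fun x => ⟨⊤, ha _⟩
  have hmem : ∀ x : ℝ, ((x : EReal), R x) ∈ B := by
    intro x
    exact ((hSclosed x).isCompact).sInf_mem (hSne x)
  have hpos : ∀ x : ℝ, 0 ≤ R x := by
    intro x
    exact (hsub (hmem x)).2
  have hiff : ∀ (x : ℝ) (t : EReal), 0 ≤ t → (((x : EReal), t) ∈ B ↔ R x ≤ t) := by
    intro x t _
    constructor
    · intro h; exact sInf_le h
    · intro h
      rcases eq_or_lt_of_le h with h | h
      · rw [← h]; exact hmem x
      · exact hc _ _ _ (hmem x) h
  refine ⟨R, ?_, hpos, hiff⟩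
  rw [lowerSemicontinuous_iff_isClosed_preimage]
  intro y
  rcases le_or_gt 0 y with hy | hy
  · have : R ⁻¹' Iic y = (fun x : ℝ => ((x : EReal), y)) ⁻¹' B := by
      ext x
      simp only [mem_preimage, mem_Iic]
      exact (hiff x y hy).symm
    rw [this]
    exact hclosed.preimage (continuous_coe_real_ereal.prodMk continuous_const)
  · have : R ⁻¹' Iic y = ∅ := by
      ext x
      simp only [mem_preimage, mem_Iic, mem_empty_iff_false, iff_false]
      exact fun h => absurd (lt_of_le_of_lt (le_trans (hpos x) h) hy) (lt_irrefl _)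
    rw [this]; exact isClosed_empty
end

section
/- Let ν, μ be integrable probability measures on ℝ and F ⊆ ℝ a set such that U_μ - C = U_{μ̂} - C_L on F and U_μ - C ≤ U_{μ̂} - C_L on all of ℝ, for some constants C, C_L and integrable measure μ̂. Then for every x ∈ F: μ((-∞,x)) ≤ μ̂((-∞,x)) ≤ μ̂((-∞,x]) ≤ μ((-∞,x]); in particular μ((-∞,x)) = μ̂((-∞,x)) whenever μ({x}) = 0, and μ({x}) ≥ μ̂({x}) whenever μ({x}) > 0. -/
open MeasureTheory Set Filter Topology

lemma aux_int_abs (ρ : Measure ℝ) [IsFiniteMeasure ρ]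
    (hρ : Integrable (fun y : ℝ => y) ρ) (z : ℝ) :
    Integrable (fun y : ℝ => |y - z|) ρ :=
  (hρ.sub (integrable_const z)).abs

lemma aux_limit_right (ρ : Measure ℝ) [IsProbabilityMeasure ρ] (x : ℝ) :
    ∫ y, (if y ≤ x then (1:ℝ) else -1) ∂ρ
      = (ρ (Iic x)).toReal - (ρ (Ioi x)).toReal := by
  have h : (fun y : ℝ => if y ≤ x then (1:ℝ) else -1)
      = fun y => (Iic x).indicator (fun _ => (1:ℝ)) y
          - (Ioi x).indicator (fun _ => (1:ℝ)) y := by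
    funext y
    by_cases h : y ≤ x
    · simp [Set.indicator_apply, h, not_lt.mpr h]
    · simp [Set.indicator_apply, h, not_le.mp h]
  rw [h, integral_sub ((integrable_const (1:ℝ)).indicator measurableSet_Iic)
        ((integrable_const (1:ℝ)).indicator measurableSet_Ioi),
      integral_indicator_const _ measurableSet_Iic,
      integral_indicator_const _ measurableSet_Ioi]
  simp
  rfl

lemma aux_limit_left (ρ : Measure ℝ) [IsProbabilityMeasure ρ] (x : ℝ) :
    ∫ y, (if x ≤ y then (1:ℝ) else -1) ∂ρ
      = (ρ (Ici x)).toReal - (ρ (Iio x)).toReal := by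
  have h : (fun y : ℝ => if x ≤ y then (1:ℝ) else -1)
      = fun y => (Ici x).indicator (fun _ => (1:ℝ)) y
          - (Iio x).indicator (fun _ => (1:ℝ)) y := by
    funext y
    by_cases h : x ≤ y
    · simp [Set.indicator_apply, h, not_lt.mpr h]
    · simp [Set.indicator_apply, h, not_le.mp h]
  rw [h, integral_sub ((integrable_const (1:ℝ)).indicator measurableSet_Ici)
        ((integrable_const (1:ℝ)).indicator measurableSet_Iio),
      integral_indicator_const _ measurableSet_Ici,
      integral_indicator_const _ measurableSet_Iio]
  simp
  rfl

lemma aux_tendsto_right (ρ : Measure ℝ) [IsProbabilityMeasure ρ] (x : ℝ) :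
    Tendsto (fun t : ℝ => ∫ y, (|y - (x + t)| - |y - x|) / t ∂ρ) (𝓝[>] 0)
      (𝓝 ((ρ (Iic x)).toReal - (ρ (Ioi x)).toReal)) := by
  rw [← aux_limit_right ρ x]
  apply tendsto_integral_filter_of_dominated_convergence (fun _ => (1:ℝ))
  · filter_upwards with t
    exact Continuous.aestronglyMeasurable (by fun_prop)
  · filter_upwards [self_mem_nhdsWithin] with t ht
    filter_upwards with y
    have ht' : (0:ℝ) < t := ht
    rw [Real.norm_eq_abs, abs_div, abs_of_pos ht', div_le_one ht']
    calc |(|y - (x + t)| - |y - x|)| ≤ |(y - (x + t)) - (y - x)| :=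
          abs_abs_sub_abs_le_abs_sub _ _
      _ = t := by rw [show (y - (x + t)) - (y - x) = -t by ring, abs_neg, abs_of_pos ht']
  · exact integrable_const 1
  · filter_upwards with y
    by_cases hy : y ≤ x
    · simp only [hy, if_true]
      apply tendsto_const_nhds.congr'
      filter_upwards [self_mem_nhdsWithin] with t ht
      have ht' : (0:ℝ) < t := ht
      have h1 : |y - (x + t)| = x + t - y := by rw [abs_of_nonpos (by linarith)]; ring
      have h2 : |y - x| = x - y := by rw [abs_of_nonpos (by linarith)]; ring
      rw [h1, h2, show x + t - y - (x - y) = t by ring, div_self (ne_of_gt ht')]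
    · simp only [hy, if_false]
      apply tendsto_const_nhds.congr'
      have hxy : x < y := not_le.mp hy
      filter_upwards [Ioo_mem_nhdsGT_of_mem (by constructor <;> [rfl; linarith] :
        (0:ℝ) ∈ Ico (0:ℝ) (y - x))] with t ht
      obtain ⟨ht1, ht2⟩ := ht
      have h1 : |y - (x + t)| = y - x - t := by rw [abs_of_nonneg (by linarith)]; ring
      have h2 : |y - x| = y - x := abs_of_nonneg (by linarith)
      rw [h1, h2, show y - x - t - (y - x) = -t by ring, neg_div, div_self (ne_of_gt ht1)]

lemma aux_tendsto_left (ρ : Measure ℝ) [IsProbabilityMeasure ρ] (x : ℝ) :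
    Tendsto (fun t : ℝ => ∫ y, (|y - (x - t)| - |y - x|) / t ∂ρ) (𝓝[>] 0)
      (𝓝 ((ρ (Ici x)).toReal - (ρ (Iio x)).toReal)) := by
  rw [← aux_limit_left ρ x]
  apply tendsto_integral_filter_of_dominated_convergence (fun _ => (1:ℝ))
  · filter_upwards with t
    exact Continuous.aestronglyMeasurable (by fun_prop)
  · filter_upwards [self_mem_nhdsWithin] with t ht
    filter_upwards with y
    have ht' : (0:ℝ) < t := ht
    rw [Real.norm_eq_abs, abs_div, abs_of_pos ht', div_le_one ht']
    calc |(|y - (x - t)| - |y - x|)| ≤ |(y - (x - t)) - (y - x)| :=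
          abs_abs_sub_abs_le_abs_sub _ _
      _ = t := by rw [show (y - (x - t)) - (y - x) = t by ring, abs_of_pos ht']
  · exact integrable_const 1
  · filter_upwards with y
    by_cases hy : x ≤ y
    · simp only [hy, if_true]
      apply tendsto_const_nhds.congr'
      filter_upwards [self_mem_nhdsWithin] with t ht
      have ht' : (0:ℝ) < t := ht
      have h1 : |y - (x - t)| = y - x + t := by rw [abs_of_nonneg (by linarith)]; ring
      have h2 : |y - x| = y - x := abs_of_nonneg (by linarith)
      rw [h1, h2, show y - x + t - (y - x) = t by ring, div_self (ne_of_gt ht')]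
    · simp only [hy, if_false]
      apply tendsto_const_nhds.congr'
      have hxy : y < x := not_le.mp hy
      filter_upwards [Ioo_mem_nhdsGT_of_mem (by constructor <;> [rfl; linarith] :
        (0:ℝ) ∈ Ico (0:ℝ) (x - y))] with t ht
      obtain ⟨ht1, ht2⟩ := ht
      have h1 : |y - (x - t)| = x - y - t := by rw [abs_of_nonpos (by linarith)]; ring
      have h2 : |y - x| = x - y := by rw [abs_of_nonpos (by linarith)]; ring
      rw [h1, h2, show x - y - t - (x - y) = -t by ring, neg_div, div_self (ne_of_gt ht1)]

lemma aux_compl_add (ρ : Measure ℝ) [IsProbabilityMeasure ρ] (s : Set ℝ)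
    (hs : MeasurableSet s) : (ρ s).toReal + (ρ sᶜ).toReal = 1 := by
  have h := measure_add_measure_compl (μ := ρ) hs
  rw [measure_univ] at h
  have := ENNReal.toReal_add (measure_ne_top ρ s) (measure_ne_top ρ sᶜ)
  rw [h] at this
  simp at this
  linarith

/-- Let `ν, μ` be integrable probability measures, `μ̂` an integrable (probability)
measure, `F ⊆ ℝ`, and constants `C, C_L` such that `U_μ - C ≤ U_{μ̂} - C_L` on `ℝ`
with equality on `F`. Then for every `x ∈ F`:
`μ((-∞,x)) ≤ μ̂((-∞,x)) ≤ μ̂((-∞,x]) ≤ μ((-∞,x])`; in particular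
`μ((-∞,x)) = μ̂((-∞,x))` when `μ({x}) = 0`, and `μ̂({x}) ≤ μ({x})` when
`μ({x}) > 0`. -/
theorem stmt_18 (ν μ μhat : Measure ℝ)
    [IsProbabilityMeasure ν] [IsProbabilityMeasure μ] [IsProbabilityMeasure μhat]
    (hνint : Integrable (fun y : ℝ => y) ν)
    (hμint : Integrable (fun y : ℝ => y) μ)
    (hμhatint : Integrable (fun y : ℝ => y) μhat)
    (F : Set ℝ) (C CL : ℝ)
    (hle : ∀ x : ℝ, (-∫ y, |y - x| ∂μ) - C ≤ (-∫ y, |y - x| ∂μhat) - CL)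
    (heq : ∀ x ∈ F, (-∫ y, |y - x| ∂μ) - C = (-∫ y, |y - x| ∂μhat) - CL) :
    ∀ x ∈ F,
      (μ (Iio x) ≤ μhat (Iio x) ∧ μhat (Iio x) ≤ μhat (Iic x) ∧
        μhat (Iic x) ≤ μ (Iic x)) ∧
      (μ {x} = 0 → μ (Iio x) = μhat (Iio x)) ∧
      (0 < μ {x} → μhat {x} ≤ μ {x}) := by
  intro x hx
  have hD : ∀ z : ℝ, (∫ y, |y - z| ∂μhat) - (∫ y, |y - z| ∂μ)
      ≤ (∫ y, |y - x| ∂μhat) - (∫ y, |y - x| ∂μ) := by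
    intro z
    have h1 := hle z
    have h2 := heq x hx
    linarith
  -- difference quotients
  have hquot : ∀ (s : ℝ → ℝ), (∀ t, 0 < t → (∫ y, |y - s t| ∂μhat) - (∫ y, |y - s t| ∂μ)
      ≤ (∫ y, |y - x| ∂μhat) - (∫ y, |y - x| ∂μ)) →
      ∀ t ∈ Ioi (0:ℝ),
      (∫ y, (|y - s t| - |y - x|) / t ∂μhat) - (∫ y, (|y - s t| - |y - x|) / t ∂μ) ≤ 0 := by
    intro s hs t ht
    have ht' : (0:ℝ) < t := ht
    have e1 : ∫ y, (|y - s t| - |y - x|) / t ∂μhat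
        = ((∫ y, |y - s t| ∂μhat) - (∫ y, |y - x| ∂μhat)) / t := by
      rw [integral_div, integral_sub (aux_int_abs μhat hμhatint _) (aux_int_abs μhat hμhatint _)]
    have e2 : ∫ y, (|y - s t| - |y - x|) / t ∂μ
        = ((∫ y, |y - s t| ∂μ) - (∫ y, |y - x| ∂μ)) / t := by
      rw [integral_div, integral_sub (aux_int_abs μ hμint _) (aux_int_abs μ hμint _)]
    rw [e1, e2, div_sub_div_same]
    exact div_nonpos_iff.mpr (Or.inr ⟨by have := hs t ht'; linarith, le_of_lt ht'⟩)
  -- right side: μhat(Iic x) ≤ μ(Iic x)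
  have hR : (μhat (Iic x)).toReal ≤ (μ (Iic x)).toReal := by
    have hlim := (aux_tendsto_right μhat x).sub (aux_tendsto_right μ x)
    have hle0 : (μhat (Iic x)).toReal - (μhat (Ioi x)).toReal
        - ((μ (Iic x)).toReal - (μ (Ioi x)).toReal) ≤ 0 := by
      refine le_of_tendsto hlim ?_
      filter_upwards [self_mem_nhdsWithin] with t ht
      exact hquot (fun t => x + t) (fun t _ => hD (x + t)) t ht
    have c1 := aux_compl_add μ (Iic x) measurableSet_Iic
    have c2 := aux_compl_add μhat (Iic x) measurableSet_Iic
    rw [compl_Iic] at c1 c2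
    linarith
  -- left side: μ(Iio x) ≤ μhat(Iio x)
  have hL : (μ (Iio x)).toReal ≤ (μhat (Iio x)).toReal := by
    have hlim := (aux_tendsto_left μhat x).sub (aux_tendsto_left μ x)
    have hle0 : (μhat (Ici x)).toReal - (μhat (Iio x)).toReal
        - ((μ (Ici x)).toReal - (μ (Iio x)).toReal) ≤ 0 := by
      refine le_of_tendsto hlim ?_
      filter_upwards [self_mem_nhdsWithin] with t ht
      exact hquot (fun t => x - t) (fun t _ => hD (x - t)) t ht
    have c1 := aux_compl_add μ (Iio x) measurableSet_Iio
    have c2 := aux_compl_add μhat (Iio x) measurableSet_Iio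
    rw [compl_Iio] at c1 c2
    linarith
  have hR' : μhat (Iic x) ≤ μ (Iic x) :=
    (ENNReal.toReal_le_toReal (measure_ne_top _ _) (measure_ne_top _ _)).mp hR
  have hL' : μ (Iio x) ≤ μhat (Iio x) :=
    (ENNReal.toReal_le_toReal (measure_ne_top _ _) (measure_ne_top _ _)).mp hL
  have hM : μhat (Iio x) ≤ μhat (Iic x) := measure_mono Iio_subset_Iic_self
  have hsplit : ∀ (ρ : Measure ℝ), ρ (Iic x) = ρ (Iio x) + ρ {x} := by
    intro ρ
    rw [← Iio_union_right, measure_union (by simp) (measurableSet_singleton x)]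
  refine ⟨⟨hL', hM, hR'⟩, ?_, ?_⟩
  · intro h0
    refine le_antisymm hL' ?_
    calc μhat (Iio x) ≤ μhat (Iic x) := hM
      _ ≤ μ (Iic x) := hR'
      _ = μ (Iio x) := by rw [hsplit μ, h0, add_zero]
  · intro _
    have key : μhat (Iio x) + μhat {x} ≤ μhat (Iio x) + μ {x} := by
      calc μhat (Iio x) + μhat {x} = μhat (Iic x) := (hsplit μhat).symm
        _ ≤ μ (Iic x) := hR'
        _ = μ (Iio x) + μ {x} := hsplit μ
        _ ≤ μhat (Iio x) + μ {x} := add_le_add_left hL' _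
    exact (ENNReal.add_le_add_iff_left (measure_ne_top _ _)).mp key
end
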